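/- Color the edges of K_n with colors 1,…,t giving subgraphs H_1,…,H_t with H_j regular for all j ≥ 3. Let v x_0 ∈ E(H_1) and x_0 u ∉ E(H_1). If there exists a vertex y ∈ N_{H_2}(v) ∩ N_{H_1}(u), or there exist y ∈ N_{H_2}(v) − N_{H_2}(u) and y' ∈ N_{H_1}(u) − N_{H_1}(v) such that the edges y u and v y' have the same color, then v x_0 and x_0 u can be exchanged (there exists an exchange list for them). -/

import Mathlib

open SimpleGraph

attribute [local instance] Classical.propDecidable

/-- The spanning subgraph of `K_n` consisting of the edges with color `j`
under the edge coloring `c`. -/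
def Hc {n : ℕ} (c : Sym2 (Fin n) → ℕ) (j : ℕ) : SimpleGraph (Fin n) where
  Adj x y := x ≠ y ∧ c s(x, y) = j
  symm := by
    constructor
    rintro x y ⟨h1, h2⟩
    exact ⟨h1.symm, by rwa [Sym2.eq_swap]⟩
  loopless := by constructor; rintro x ⟨h, -⟩; exact h rfl

/-- An exchange for the edges `v x₀` and `x₀ u` (with `x₀ = x 0`): a cyclic list of
`2l` distinct edges `(v x₀, x₀ u, v x₁, x₁ u, …, v x_{l-1}, x_{l-1} u)` such that
`x_i u` and `v x_{i+1}` have the same color for all `i` modulo `l`. -/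
def IsExchange {n : ℕ} (c : Sym2 (Fin n) → ℕ) (v u : Fin n) (l : ℕ)
    (x : ℕ → Fin n) : Prop :=
  0 < l ∧ (∀ i, i < l → x i ≠ u ∧ x i ≠ v) ∧
    (∀ i j, i < l → j < l → x i = x j → i = j) ∧
    (∀ i, i < l → c s(x i, u) = c s(v, x ((i + 1) % l)))

/-- The set `X(L) = {x₀, …, x_{l-1}}` of an exchange (or near exchange). -/
def ExchX {n : ℕ} (l : ℕ) (x : ℕ → Fin n) : Set (Fin n) := {y | ∃ i < l, x i = y}

/-- An exchange is simplified if for each color class at most one `x_j` has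
`v x_j` of that color. -/
def Simplified {n : ℕ} (c : Sym2 (Fin n) → ℕ) (v : Fin n) (l : ℕ)
    (x : ℕ → Fin n) : Prop :=
  ∀ i j, i < l → j < l → c s(v, x i) = c s(v, x j) → i = j


/-- Invariant of a partial chain. -/
def ChainInv {n : ℕ} (c : Sym2 (Fin n) → ℕ) (u v x0 : Fin n) (i : ℕ)
    (x : ℕ → Fin n) : Prop :=
  x 0 = x0 ∧ c s(v, x 0) = 1 ∧
  (∀ k, k ≤ i → x k ≠ u ∧ x k ≠ v) ∧
  (∀ k l, k ≤ i → l ≤ i → x k = x l → k = l) ∧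
  (∀ k, k < i → c s(x k, u) = c s(v, x (k + 1))) ∧
  (∀ k, k < i → c s(x k, u) ≠ 1 ∧ c s(x k, u) ≠ 2)

lemma mk_exchange {n : ℕ} (c : Sym2 (Fin n) → ℕ) (v u : Fin n) (l : ℕ) (x : ℕ → Fin n)
    (hl : 0 < l) (hne : ∀ i, i < l → x i ≠ u ∧ x i ≠ v)
    (hinj : ∀ i j, i < l → j < l → x i = x j → i = j)
    (hchain : ∀ i, i + 1 < l → c s(x i, u) = c s(v, x (i + 1)))
    (hclose : c s(x (l - 1), u) = c s(v, x 0)) :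
    IsExchange c v u l x := by
  refine ⟨hl, hne, hinj, fun i hi => ?_⟩
  rcases Nat.lt_or_ge (i + 1) l with h | h
  · rw [Nat.mod_eq_of_lt h]; exact hchain i h
  · have hmod : (i + 1) % l = 0 := by
      rw [show i + 1 = l from by omega]; exact Nat.mod_self l
    rw [hmod, show i = l - 1 from by omega]
    exact hclose

lemma extend_step {n : ℕ} (c : Sym2 (Fin n) → ℕ) (u v x0 : Fin n) (i : ℕ)
    (x : ℕ → Fin n) (hinv : ChainInv c u v x0 i x) (j r : ℕ) (hj : 3 ≤ j)
    (hr : (Hc c j).IsRegularOfDegree r) (hji : c s(x i, u) = j) :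
    ∃ z, (Hc c j).Adj v z ∧ z ≠ u ∧ ∀ k, k ≤ i → x k ≠ z := by
  classical
  obtain ⟨hx0, hvx0, hnuv, hinj, hchain, hc12⟩ := hinv
  set A := (Hc c j).neighborFinset u with hAdef
  set B := (Hc c j).neighborFinset v with hBdef
  have hAcard : A.card = r := hr u
  have hBcard : B.card = r := hr v
  set Xs := (Finset.range (i + 1)).image x with hXdef
  set Ai := (Finset.range (i + 1)).filter (fun k => c s(x k, u) = j) with hAidef
  set Bi := (Finset.range (i + 1)).filter (fun k => c s(v, x k) = j) with hBidef
  have memA : ∀ z, z ∈ A ↔ u ≠ z ∧ c s(u, z) = j := by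
    intro z; rw [hAdef, SimpleGraph.mem_neighborFinset]; rfl
  have memB : ∀ z, z ∈ B ↔ v ≠ z ∧ c s(v, z) = j := by
    intro z; rw [hBdef, SimpleGraph.mem_neighborFinset]; rfl
  have hAX : A ∩ Xs = Ai.image x := by
    ext z
    simp only [Finset.mem_inter, Finset.mem_image, Finset.mem_filter, Finset.mem_range,
      memA, hXdef, hAidef]
    constructor
    · rintro ⟨⟨-, hcz⟩, k, hk, rfl⟩
      exact ⟨k, ⟨hk, by rwa [Sym2.eq_swap]⟩, rfl⟩
    · rintro ⟨k, ⟨hk, hck⟩, rfl⟩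
      exact ⟨⟨(hnuv k (by omega)).1.symm, by rwa [Sym2.eq_swap] at hck⟩, k, hk, rfl⟩
  have hBX : B ∩ Xs = Bi.image x := by
    ext z
    simp only [Finset.mem_inter, Finset.mem_image, Finset.mem_filter, Finset.mem_range,
      memB, hXdef, hBidef]
    constructor
    · rintro ⟨⟨-, hcz⟩, k, hk, rfl⟩
      exact ⟨k, ⟨hk, hcz⟩, rfl⟩
    · rintro ⟨k, ⟨hk, hck⟩, rfl⟩
      exact ⟨⟨(hnuv k (by omega)).2.symm, hck⟩, k, hk, rfl⟩
  have hinjX : ∀ s : Finset ℕ, s ⊆ Finset.range (i + 1) → Set.InjOn x s := by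
    intro s hs a ha b hb hab
    have ha' := Finset.mem_range.mp (hs ha)
    have hb' := Finset.mem_range.mp (hs hb)
    exact hinj a b (by omega) (by omega) hab
  have hAXcard : (A ∩ Xs).card = Ai.card := by
    rw [hAX]; exact Finset.card_image_of_injOn (hinjX _ (Finset.filter_subset _ _))
  have hBXcard : (B ∩ Xs).card = Bi.card := by
    rw [hBX]; exact Finset.card_image_of_injOn (hinjX _ (Finset.filter_subset _ _))
  -- membership characterizations
  have memAi : ∀ k, k ∈ Ai ↔ k < i + 1 ∧ c s(x k, u) = j := by
    intro k; rw [hAidef]; simp [Finset.mem_filter, Finset.mem_range]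
  have memBi : ∀ k, k ∈ Bi ↔ k < i + 1 ∧ c s(v, x k) = j := by
    intro k; rw [hBidef]; simp [Finset.mem_filter, Finset.mem_range]
  have hBi0 : ∀ k, k ∈ Bi → k ≠ 0 := by
    intro k hk
    rintro rfl
    have := ((memBi 0).mp hk).2
    rw [hvx0] at this
    omega
  -- the bijection between Bi and Ai.erase i
  have hBiAi : Bi.card + 1 = Ai.card := by
    have hbij : Bi.card = (Ai.erase i).card := by
      apply Finset.card_nbij' (fun k => k - 1) (fun k => k + 1)
      · intro k hk
        obtain ⟨hk1, hk2⟩ := (memBi k).mp hk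
        have hk0 : k ≠ 0 := hBi0 k hk
        have hki : k - 1 < i := by omega
        simp only [Finset.mem_coe]; rw [Finset.mem_erase, memAi]
        refine ⟨by omega, by omega, ?_⟩
        rw [hchain (k - 1) hki, show k - 1 + 1 = k from by omega]
        exact hk2
      · intro k hk
        simp only [Finset.mem_coe] at hk ⊢; rw [Finset.mem_erase, memAi] at hk
        obtain ⟨hki, hk1, hk2⟩ := hk
        have hlt : k < i := by omega
        rw [memBi]
        exact ⟨by omega, by rw [← hchain k hlt]; exact hk2⟩
      · intro k hk
        have := hBi0 k hk
        beta_reduce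
        omega
      · intro k _
        beta_reduce
        omega
    have hiAi : i ∈ Ai := (memAi i).mpr ⟨by omega, hji⟩
    rw [hbij]
    exact Finset.card_erase_add_one hiAi
  have hvX : v ∉ Xs := by
    simp only [hXdef, Finset.mem_image, Finset.mem_range]
    rintro ⟨k, hk, hkv⟩
    exact (hnuv k (by omega)).2 hkv
  have hmain : (B ∩ insert u Xs).card < B.card := by
    have hsub : B ∩ insert u Xs ⊆ insert u (B ∩ Xs) := by
      intro z hz
      simp only [Finset.mem_inter, Finset.mem_insert] at hz ⊢
      tauto
    by_cases hu : u ∈ B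
    · have hvA : v ∈ A := by
        rw [memA]
        rw [memB] at hu
        refine ⟨hu.1.symm, ?_⟩
        rw [Sym2.eq_swap]
        exact hu.2
      have hvAX : v ∉ A ∩ Xs := fun h => hvX (Finset.mem_inter.mp h).2
      have hins : (A ∩ Xs).card + 1 ≤ A.card := by
        have h1 : insert v (A ∩ Xs) ⊆ A := by
          intro z hz
          rcases Finset.mem_insert.mp hz with rfl | hz
          · exact hvA
          · exact (Finset.mem_inter.mp hz).1
        calc (A ∩ Xs).card + 1 = (insert v (A ∩ Xs)).card :=
              (Finset.card_insert_of_notMem hvAX).symm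
          _ ≤ A.card := Finset.card_le_card h1
      calc (B ∩ insert u Xs).card ≤ (insert u (B ∩ Xs)).card := Finset.card_le_card hsub
        _ ≤ (B ∩ Xs).card + 1 := Finset.card_insert_le _ _
        _ < B.card := by
            rw [hBXcard]
            rw [hAXcard] at hins
            omega
    · have heq : B ∩ insert u Xs = B ∩ Xs := by
        ext z
        simp only [Finset.mem_inter, Finset.mem_insert]
        constructor
        · rintro ⟨hzB, rfl | hz⟩
          · exact absurd hzB hu
          · exact ⟨hzB, hz⟩
        · rintro ⟨hzB, hz⟩; exact ⟨hzB, Or.inr hz⟩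
      rw [heq, hBXcard]
      have : Ai.card ≤ A.card := by
        rw [← hAXcard]; exact Finset.card_le_card Finset.inter_subset_left
      omega
  have hnsub : ¬ B ⊆ insert u Xs := by
    intro h
    rw [Finset.inter_eq_left.mpr h] at hmain
    omega
  obtain ⟨z, hzB, hznot⟩ := Finset.not_subset.mp hnsub
  refine ⟨z, ?_, ?_, ?_⟩
  · rw [← SimpleGraph.mem_neighborFinset]; exact hzB
  · intro h; exact hznot (by simp [h])
  · intro k hk hkz
    apply hznot
    simp only [Finset.mem_insert, hXdef, Finset.mem_image, Finset.mem_range]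
    exact Or.inr ⟨k, by omega, hkz⟩

lemma chain_bound {n : ℕ} (c : Sym2 (Fin n) → ℕ) (u v x0 : Fin n)
    (x : ℕ → Fin n) (hinv : ChainInv c u v x0 n x) : False := by
  classical
  obtain ⟨-, -, -, hinj, -, -⟩ := hinv
  have hcard : ((Finset.range (n + 1)).image x).card = n + 1 := by
    rw [Finset.card_image_of_injOn, Finset.card_range]
    intro a ha b hb hab
    have ha' := Finset.mem_range.mp ha
    have hb' := Finset.mem_range.mp hb
    exact hinj a b (by omega) (by omega) hab
  have hle : ((Finset.range (n + 1)).image x).card ≤ n := by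
    have := Finset.card_le_univ ((Finset.range (n + 1)).image x)
    simpa using this
  omega

lemma build {n t : ℕ} (c : Sym2 (Fin n) → ℕ)
    (hcol : ∀ e : Sym2 (Fin n), ¬ e.IsDiag → 1 ≤ c e ∧ c e ≤ t)
    (hreg : ∀ j, 3 ≤ j → j ≤ t → ∃ r, (Hc c j).IsRegularOfDegree r)
    (u v x0 : Fin n) (hx0u : x0 ≠ u) (hx0v : x0 ≠ v) (hvx0 : c s(v, x0) = 1) :
    ∀ m : ℕ, (∃ i x, ChainInv c u v x0 i x ∧ (c s(x i, u) = 1 ∨ c s(x i, u) = 2)) ∨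
      (∃ x, ChainInv c u v x0 m x ∧ c s(x m, u) ≠ 1 ∧ c s(x m, u) ≠ 2) := by
  intro m
  induction m with
  | zero =>
    have hinv0 : ChainInv c u v x0 0 (fun _ => x0) :=
      ⟨rfl, hvx0, fun k _ => ⟨hx0u, hx0v⟩, fun k l hk hl _ => by omega,
        fun k hk => absurd hk (by omega), fun k hk => absurd hk (by omega)⟩
    by_cases h12 : c s(x0, u) = 1 ∨ c s(x0, u) = 2
    · exact Or.inl ⟨0, fun _ => x0, hinv0, h12⟩
    · push_neg at h12
      exact Or.inr ⟨fun _ => x0, hinv0, h12.1, h12.2⟩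
  | succ m ih =>
    rcases ih with h | ⟨x, hinv, hne1, hne2⟩
    · exact Or.inl h
    have hxmu : x m ≠ u := (hinv.2.2.1 m le_rfl).1
    have hdiag : ¬ (s(x m, u)).IsDiag := by
      simp [Sym2.mk_isDiag_iff, hxmu]
    obtain ⟨hj1, hjt⟩ := hcol _ hdiag
    have hj3 : 3 ≤ c s(x m, u) := by omega
    obtain ⟨r, hr⟩ := hreg _ hj3 hjt
    obtain ⟨z, hadj, hzu, hzfresh⟩ := extend_step c u v x0 m x hinv _ r hj3 hr rfl
    have hzv : z ≠ v := Ne.symm hadj.ne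
    have hcvz : c s(v, z) = c s(x m, u) := hadj.2
    set x' : ℕ → Fin n := fun k => if k ≤ m then x k else z with hx'def
    have hx'le : ∀ k, k ≤ m → x' k = x k := fun k hk => if_pos hk
    have hx'succ : x' (m + 1) = z := if_neg (by omega)
    obtain ⟨hx0', hvx0', hnuv, hinj, hchain, hc12⟩ := hinv
    have hinv' : ChainInv c u v x0 (m + 1) x' := by
      refine ⟨by rw [hx'le 0 (by omega)]; exact hx0',
        by rw [hx'le 0 (by omega)]; exact hvx0', ?_, ?_, ?_, ?_⟩
      · intro k hk
        rcases Nat.lt_or_ge k (m + 1) with h | h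
        · rw [hx'le k (by omega)]; exact hnuv k (by omega)
        · rw [show k = m + 1 from by omega, hx'succ]
          exact ⟨hzu, hzv⟩
      · intro k l hk hl heq
        rcases Nat.lt_or_ge k (m + 1) with h | h <;>
          rcases Nat.lt_or_ge l (m + 1) with h' | h'
        · rw [hx'le k (by omega), hx'le l (by omega)] at heq
          exact hinj k l (by omega) (by omega) heq
        · rw [hx'le k (by omega), show l = m + 1 from by omega, hx'succ] at heq
          exact absurd heq (hzfresh k (by omega))
        · rw [show k = m + 1 from by omega, hx'succ, hx'le l (by omega)] at heq
          exact absurd heq.symm (hzfresh l (by omega))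
        · omega
      · intro k hk
        rcases Nat.lt_or_ge k m with h | h
        · rw [hx'le k (by omega), hx'le (k + 1) (by omega)]
          exact hchain k h
        · rw [show k = m from by omega, hx'le m le_rfl, hx'succ]
          exact hcvz.symm
      · intro k hk
        rcases Nat.lt_or_ge k m with h | h
        · rw [hx'le k (by omega)]
          exact hc12 k h
        · rw [show k = m from by omega, hx'le m le_rfl]
          exact ⟨hne1, hne2⟩
    by_cases h12 : c s(z, u) = 1 ∨ c s(z, u) = 2
    · refine Or.inl ⟨m + 1, x', hinv', ?_⟩
      rw [hx'succ]
      exact h12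
    · push_neg at h12
      refine Or.inr ⟨x', hinv', ?_, ?_⟩ <;> rw [hx'succ]
      · exact h12.1
      · exact h12.2

lemma closeA {n : ℕ} (c : Sym2 (Fin n) → ℕ) (u v x0 : Fin n) (i : ℕ) (x : ℕ → Fin n)
    (hinv : ChainInv c u v x0 i x) (htwo : c s(x i, u) = 2)
    (y : Fin n) (hvy : c s(v, y) = 2) (hyu1 : c s(y, u) = 1)
    (hyu : y ≠ u) (hyv : y ≠ v) :
    ∃ l x', IsExchange c v u l x' ∧ x' 0 = x0 := by
  obtain ⟨hx0, hvx0, hnuv, hinj, hchain, hc12⟩ := hinv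
  have hfresh : ∀ k, k ≤ i → x k ≠ y := by
    intro k hk heq
    match k, hk with
    | 0, _ => rw [heq, hvy] at hvx0; omega
    | (k' + 1), hk =>
      have h := hchain k' (by omega)
      rw [heq, hvy] at h
      exact (hc12 k' (by omega)).2 h
  set x' : ℕ → Fin n := fun k => if k ≤ i then x k else y with hx'def
  have e1 : ∀ k, k ≤ i → x' k = x k := fun k hk => if_pos hk
  have e2 : x' (i + 1) = y := if_neg (by omega)
  refine ⟨i + 2, x', mk_exchange c v u _ _ (by omega) ?_ ?_ ?_ ?_,
    by rw [e1 0 (by omega)]; exact hx0⟩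
  · intro k hk
    rcases Nat.lt_or_ge k (i + 1) with h | h
    · rw [e1 k (by omega)]; exact hnuv k (by omega)
    · rw [show k = i + 1 from by omega, e2]; exact ⟨hyu, hyv⟩
  · intro k l hk hl heq
    rcases Nat.lt_or_ge k (i + 1) with h | h <;>
      rcases Nat.lt_or_ge l (i + 1) with h' | h'
    · rw [e1 k (by omega), e1 l (by omega)] at heq
      exact hinj k l (by omega) (by omega) heq
    · rw [e1 k (by omega), show l = i + 1 from by omega, e2] at heq
      exact absurd heq (hfresh k (by omega))
    · rw [show k = i + 1 from by omega, e2, e1 l (by omega)] at heq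
      exact absurd heq.symm (hfresh l (by omega))
    · omega
  · intro k hk
    rcases Nat.lt_or_ge k i with h | h
    · rw [e1 k (by omega), e1 (k + 1) (by omega)]
      exact hchain k h
    · rw [show k = i from by omega, e1 i le_rfl, e2, htwo, hvy]
  · rw [show i + 2 - 1 = i + 1 from by omega, e2, e1 0 (by omega), hyu1, hvx0]

lemma closeB {n : ℕ} (c : Sym2 (Fin n) → ℕ) (u v x0 : Fin n) (i : ℕ) (x : ℕ → Fin n)
    (hinv : ChainInv c u v x0 i x) (htwo : c s(x i, u) = 2)
    (y y' : Fin n) (hvy : c s(v, y) = 2) (hyu : y ≠ u) (hyv : y ≠ v)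
    (hm2 : c s(y, u) ≠ 2)
    (hvy' : c s(v, y') = c s(y, u)) (hy'u1 : c s(y', u) = 1)
    (hy'u : y' ≠ u) (hy'v : y' ≠ v) :
    ∃ l x', IsExchange c v u l x' ∧ x' 0 = x0 := by
  obtain ⟨hx0, hvx0, hnuv, hinj, hchain, hc12⟩ := hinv
  have hfreshy : ∀ k, k ≤ i → x k ≠ y := by
    intro k hk heq
    match k, hk with
    | 0, _ => rw [heq, hvy] at hvx0; omega
    | (k' + 1), hk =>
      have h := hchain k' (by omega)
      rw [heq, hvy] at h
      exact (hc12 k' (by omega)).2 h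
  have hfreshy' : ∀ k, k ≤ i → x k ≠ y' := by
    intro k hk heq
    rcases Nat.lt_or_ge k i with h | h
    · exact (hc12 k h).1 (by rw [heq, hy'u1])
    · rw [show k = i from by omega] at heq
      rw [heq, hy'u1] at htwo
      omega
  have hyy' : y ≠ y' := by
    intro h
    rw [h, hvy'] at hvy
    omega
  set x' : ℕ → Fin n := fun k => if k ≤ i then x k else if k = i + 1 then y else y'
    with hx'def
  have e1 : ∀ k, k ≤ i → x' k = x k := fun k hk => if_pos hk
  have e2 : x' (i + 1) = y := by
    show (if i + 1 ≤ i then x (i + 1) else if i + 1 = i + 1 then y else y') = y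
    rw [if_neg (by omega), if_pos rfl]
  have e3 : x' (i + 2) = y' := by
    show (if i + 2 ≤ i then x (i + 2) else if i + 2 = i + 1 then y else y') = y'
    rw [if_neg (by omega), if_neg (by omega)]
  refine ⟨i + 3, x', mk_exchange c v u _ _ (by omega) ?_ ?_ ?_ ?_,
    by rw [e1 0 (by omega)]; exact hx0⟩
  · intro k hk
    rcases Nat.lt_or_ge k (i + 1) with h | h
    · rw [e1 k (by omega)]; exact hnuv k (by omega)
    rcases Nat.lt_or_ge k (i + 2) with h' | h'
    · rw [show k = i + 1 from by omega, e2]; exact ⟨hyu, hyv⟩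
    · rw [show k = i + 2 from by omega, e3]; exact ⟨hy'u, hy'v⟩
  · intro k l hk hl heq
    have ek : ∀ m, m < i + 3 →
        (m ≤ i ∧ x' m = x m) ∨ (m = i + 1 ∧ x' m = y) ∨ (m = i + 2 ∧ x' m = y') := by
      intro m hm
      rcases Nat.lt_or_ge m (i + 1) with h | h
      · exact Or.inl ⟨by omega, e1 m (by omega)⟩
      rcases Nat.lt_or_ge m (i + 2) with h' | h'
      · exact Or.inr (Or.inl ⟨by omega, by rw [show m = i + 1 from by omega, e2]⟩)
      · exact Or.inr (Or.inr ⟨by omega, by rw [show m = i + 2 from by omega, e3]⟩)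
    rcases ek k hk with ⟨hk1, hk2⟩ | ⟨hk1, hk2⟩ | ⟨hk1, hk2⟩ <;>
      rcases ek l hl with ⟨hl1, hl2⟩ | ⟨hl1, hl2⟩ | ⟨hl1, hl2⟩ <;>
      rw [hk2, hl2] at heq
    · exact hinj k l hk1 hl1 heq
    · exact absurd heq (hfreshy k hk1)
    · exact absurd heq (hfreshy' k hk1)
    · exact absurd heq.symm (hfreshy l hl1)
    · omega
    · exact absurd heq hyy'
    · exact absurd heq.symm (hfreshy' l hl1)
    · exact absurd heq.symm hyy'
    · omega
  · intro k hk
    rcases Nat.lt_or_ge k i with h | h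
    · rw [e1 k (by omega), e1 (k + 1) (by omega)]
      exact hchain k h
    rcases Nat.lt_or_ge k (i + 1) with h' | h'
    · rw [show k = i from by omega, e1 i le_rfl, e2, htwo, hvy]
    · rw [show k = i + 1 from by omega, e2, e3, hvy']
  · rw [show i + 3 - 1 = i + 2 from by omega, e3, e1 0 (by omega), hy'u1, hvx0]

theorem guarantee_exchange
    (n t : ℕ) (c : Sym2 (Fin n) → ℕ)
    (hcol : ∀ e : Sym2 (Fin n), ¬ e.IsDiag → 1 ≤ c e ∧ c e ≤ t)
    (hreg : ∀ j, 3 ≤ j → j ≤ t → ∃ r, (Hc c j).IsRegularOfDegree r)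
    (u v x0 : Fin n)
    (h1 : (Hc c 1).Adj v x0)
    (h2 : ¬ (Hc c 1).Adj x0 u) (hx0u : x0 ≠ u)
    (hy : (∃ y, (Hc c 2).Adj v y ∧ (Hc c 1).Adj u y) ∨
      (∃ y y', (Hc c 2).Adj v y ∧ ¬ (Hc c 2).Adj u y ∧ y ≠ u ∧
        (Hc c 1).Adj u y' ∧ ¬ (Hc c 1).Adj v y' ∧ y' ≠ v ∧
        c s(y, u) = c s(v, y'))) :
    ∃ (l : ℕ) (x : ℕ → Fin n), IsExchange c v u l x ∧ x 0 = x0 := by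
  have hx0v : x0 ≠ v := Ne.symm h1.ne
  have hvx0 : c s(v, x0) = 1 := h1.2
  -- build the chain until the color of `x i u` is 1 or 2
  obtain ⟨i, x, hinv, h12⟩ :
      ∃ i x, ChainInv c u v x0 i x ∧ (c s(x i, u) = 1 ∨ c s(x i, u) = 2) := by
    rcases build c hcol hreg u v x0 hx0u hx0v hvx0 n with h | ⟨x, hinv, -⟩
    · exact h
    · exact absurd hinv (fun h => chain_bound c u v x0 x h)
  rcases h12 with hone | htwo
  · -- close the cycle directly
    obtain ⟨hx0, hvx0', hnuv, hinj, hchain, -⟩ := hinv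
    refine ⟨i + 1, x, mk_exchange c v u _ _ (by omega)
      (fun k hk => hnuv k (by omega))
      (fun k l hk hl h => hinj k l (by omega) (by omega) h)
      (fun k hk => hchain k (by omega)) ?_, hx0⟩
    rw [show i + 1 - 1 = i from by omega, hone, hvx0']
  · -- use the hypothesis `hy` to close the cycle
    rcases hy with ⟨y, hvy, huy⟩ | ⟨y, y', hvy, hnu2, hyune, huy', -, hy'v, heqc⟩
    · exact closeA c u v x0 i x hinv htwo y hvy.2
        (by rw [Sym2.eq_swap]; exact huy.2) (Ne.symm huy.ne) (Ne.symm hvy.ne)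
    · have hyu2 : c s(y, u) ≠ 2 := by
        rw [Sym2.eq_swap]
        exact fun h => hnu2 ⟨Ne.symm hyune, h⟩
      by_cases hm1 : c s(y, u) = 1
      · exact closeA c u v x0 i x hinv htwo y hvy.2 hm1 hyune (Ne.symm hvy.ne)
      · exact closeB c u v x0 i x hinv htwo y y' hvy.2 hyune (Ne.symm hvy.ne) hyu2
          heqc.symm (by rw [Sym2.eq_swap]; exact huy'.2) (Ne.symm huy'.ne) hy'v
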